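/- If (cₙ)ₙ≥₁ is a square-summable real sequence and Σₙ cₙ e^{-n²t} = 0 for all t in a nondegenerate interval [a,b] with a > 0, then cₙ = 0 for all n. -/
import Mathlib


open Real
open scoped ENNReal NNReal

/-- If (cₙ)ₙ≥₁ ∈ ℓ² and Σₙ cₙ e^{-n²t} = 0 for all t in a nondegenerate interval
[a,b] with a > 0, then all cₙ vanish. (Here c n stands for c_{n+1}.) -/
theorem stmt_4 (c : ℕ → ℝ) (hc : Memℓp c 2) (a b : ℝ) (ha : 0 < a) (hab : a < b)
    (h : ∀ t ∈ Set.Icc a b,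
      ∑' n : ℕ, c n * Real.exp (-((n : ℝ) + 1) ^ 2 * t) = 0) :
    ∀ n, c n = 0 := by
  classical
  -- the coefficient sequence of the power series g(x) = ∑ c n * x^((n+1)^2)
  set aa : ℕ → ℝ := fun k => if hk : ∃ n : ℕ, (n + 1) ^ 2 = k then c (Nat.find hk) else 0 with haa
  have sq_inj : Function.Injective (fun n : ℕ => (n + 1) ^ 2) := by
    intro m n hmn
    have := Nat.pow_left_injective two_ne_zero hmn
    omega
  have aa_spec : ∀ n : ℕ, aa ((n + 1) ^ 2) = c n := by
    intro n
    have hk : ∃ m : ℕ, (m + 1) ^ 2 = (n + 1) ^ 2 := ⟨n, rfl⟩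
    simp only [haa, dif_pos hk]
    congr 1
    exact sq_inj (Nat.find_spec hk)
  have aa_cases : ∀ k, aa k = 0 ∨ ∃ n : ℕ, (n + 1) ^ 2 = k ∧ aa k = c n := by
    intro k
    by_cases hk : ∃ n : ℕ, (n + 1) ^ 2 = k
    · exact Or.inr ⟨Nat.find hk, Nat.find_spec hk, by simp [haa, dif_pos hk]⟩
    · exact Or.inl (by simp [haa, dif_neg hk])
  -- the c n are bounded
  have hsum : Summable fun n => ‖c n‖ ^ (2 : ℝ) := by
    have := hc.summable (p := 2) (by norm_num)
    simpa using this
  obtain ⟨C, hC⟩ : ∃ C : ℝ, ∀ n, ‖c n‖ ≤ C := by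
    refine ⟨max 1 (∑' n, ‖c n‖ ^ (2 : ℝ)), fun n => ?_⟩
    have h1 : ‖c n‖ ^ (2 : ℝ) ≤ ∑' n, ‖c n‖ ^ (2 : ℝ) :=
      Summable.le_tsum hsum n (fun m _ => by positivity)
    rcases le_or_gt ‖c n‖ 1 with hle | hgt
    · exact hle.trans (le_max_left _ _)
    · have : ‖c n‖ ≤ ‖c n‖ ^ (2 : ℝ) := by
        rw [Real.rpow_two]
        nlinarith [norm_nonneg (c n)]
      exact le_max_of_le_right (this.trans h1)
  have haaC : ∀ k, ‖aa k‖ ≤ max C 0 := by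
    intro k
    rcases aa_cases k with h0 | ⟨n, _, hn⟩
    · simp [h0]
    · rw [hn]; exact (hC n).trans (le_max_left _ _)
  -- the formal power series
  set p : FormalMultilinearSeries ℝ ℝ ℝ := FormalMultilinearSeries.ofScalars ℝ aa with hp
  have hrad : (1 : ℝ≥0∞) ≤ p.radius := by
    have := p.le_radius_of_bound (max C 0) (r := 1) (fun n => by
      simp only [hp, FormalMultilinearSeries.ofScalars_norm]
      calc ‖aa n‖ * (1 : ℝ≥0) ^ n ≤ ‖aa n‖ := by simp
        _ ≤ max C 0 := haaC n)
    simpa using this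
  have hpos : (0 : ℝ≥0∞) < p.radius := lt_of_lt_of_le (by norm_num) hrad
  have hball : HasFPowerSeriesOnBall p.sum p 0 1 :=
    (p.hasFPowerSeriesOnBall hpos).mono (by norm_num) hrad
  -- p.sum (exp (-t)) is the given series, for t ∈ [a, b]
  have key : ∀ t ∈ Set.Icc a b,
      p.sum (Real.exp (-t)) = ∑' n : ℕ, c n * Real.exp (-((n : ℝ) + 1) ^ 2 * t) := by
    intro t _
    have hsum_eq : p.sum (Real.exp (-t)) = ∑' k : ℕ, aa k * Real.exp (-t) ^ k := by
      rw [FormalMultilinearSeries.sum]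
      refine tsum_congr fun k => ?_
      rw [FormalMultilinearSeries.ofScalars_apply_eq, smul_eq_mul]
    rw [hsum_eq]
    refine tsum_eq_tsum_of_ne_zero_bij
      (fun n => ((n : ℕ) + 1) ^ 2) ?_ ?_ ?_
    · intro x y hxy
      exact Subtype.coe_injective (sq_inj hxy)
    · intro k hk
      rcases aa_cases k with h0 | ⟨n, hkn, hn⟩
      · exact absurd (by simp [h0]) hk
      · refine ⟨⟨n, ?_⟩, hkn⟩
        have hck : c n ≠ 0 := by
          intro hcn
          apply hk
          simp [hn, hcn]
        simp only [Function.mem_support]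
        positivity
    · intro n
      rw [aa_spec]
      congr 1
      rw [← Real.exp_nat_mul]
      congr 1
      push_cast
      ring
  -- p.sum vanishes on a nondegenerate interval inside the unit ball
  set x₀ : ℝ := Real.exp (-((a + b) / 2)) with hx₀
  have hx₀ball : x₀ ∈ Metric.ball (0 : ℝ) 1 := by
    simp only [Metric.mem_ball, dist_zero_right, Real.norm_eq_abs, hx₀,
      abs_of_pos (Real.exp_pos _)]
    rw [Real.exp_lt_one_iff]
    linarith
  have hIoo : Set.Ioo (Real.exp (-b)) (Real.exp (-a)) ∈ nhds x₀ := by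
    refine IsOpen.mem_nhds isOpen_Ioo ?_
    constructor <;> rw [hx₀, Real.exp_lt_exp] <;> linarith
  have hzero_Ioo : ∀ x ∈ Set.Ioo (Real.exp (-b)) (Real.exp (-a)), p.sum x = 0 := by
    intro x hx
    have hxpos : 0 < x := lt_trans (Real.exp_pos _) hx.1
    have hxt : x = Real.exp (-(-Real.log x)) := by rw [neg_neg, Real.exp_log hxpos]
    set t : ℝ := -Real.log x with ht
    have htmem : t ∈ Set.Icc a b := by
      constructor
      · have := hx.2
        rw [← Real.exp_log hxpos, Real.exp_lt_exp] at this
        simp only [ht]; linarith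
      · have := hx.1
        rw [← Real.exp_log hxpos, Real.exp_lt_exp] at this
        simp only [ht]; linarith
    rw [hxt, key t htmem]
    exact h t htmem
  -- identity theorem: p.sum = 0 on the whole unit ball
  have hanal : AnalyticOnNhd ℝ p.sum (Metric.ball (0 : ℝ) 1) := by
    have := hball.analyticOnNhd
    refine this.mono ?_
    rw [show (1 : ℝ≥0∞) = ((1 : ℝ≥0) : ℝ≥0∞) from rfl, Metric.emetric_ball_nnreal]
    norm_num
  have hEqOn : Set.EqOn p.sum 0 (Metric.ball (0 : ℝ) 1) := by
    refine hanal.eqOn_zero_of_preconnected_of_eventuallyEq_zero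
      (convex_ball (0 : ℝ) 1).isPreconnected hx₀ball ?_
    filter_upwards [hIoo] with x hx using hzero_Ioo x hx
  -- hence the power series is zero
  have hpz : p = 0 := by
    refine hball.hasFPowerSeriesAt.eq_zero_of_eventually ?_
    filter_upwards [Metric.ball_mem_nhds (0 : ℝ) one_pos] with x hx using hEqOn hx
  have haaz : aa = 0 := by
    rwa [hp, FormalMultilinearSeries.ofScalars_series_eq_zero] at hpz
  intro n
  rw [← aa_spec n, haaz, Pi.zero_apply]
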